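/- arXiv:1111.5220 — 2 statements merged into one kernel-verified Lean document; each statement's English description precedes it below -/
import Mathlib

section
/- (Observation 2, centroid path decomposition height.) Let T be a finite rooted ordered tree and let T^c be its centroid path decomposition, i.e., the path decomposition obtained by always choosing heavy paths. Then 2^{height(T^c)} ≤ leaves(T); in particular the height of T^c is at most log₂ of the number of leaves of T. -/
/-- A finite rooted ordered tree: a node with a (possibly empty) list of children. -/
inductive RTree : Type where
  | node : List RTree → RTree

namespace RTree

/-- Number of leaves of a tree; a leaf (node with no children) has one leaf. -/
def leaves : RTree → ℕ
  | node [] => 1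
  | node cs => (cs.attach.map fun x => leaves x.1).sum
decreasing_by simp only [RTree.node.sizeOf_spec]; have := List.sizeOf_lt_of_mem x.2; omega

/-- Height of a tree: number of edges on a longest root-to-leaf path. -/
def height : RTree → ℕ
  | node cs => (cs.attach.map fun x => height x.1 + 1).foldr max 0
decreasing_by simp only [RTree.node.sizeOf_spec]; have := List.sizeOf_lt_of_mem x.2; omega

/-- `CentroidDecomp t d` : `d` is a centroid path decomposition of `t`, i.e. a path
decomposition in which the chosen root-to-leaf path always descends to a heavy child
(a child with the maximal number of leaves, ties broken arbitrarily).
The root of `d` represents the chosen root-to-leaf path of `t`; its children are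
centroid path decompositions of the subtrees hanging off the chosen path, arranged
in an arbitrary order. -/
inductive CentroidDecomp : RTree → RTree → Prop where
  | leaf : CentroidDecomp (node []) (node [])
  | step {cs : List RTree} (i : Fin cs.length) {hs ds es : List RTree} :
      (∀ j : Fin cs.length, leaves (cs.get j) ≤ leaves (cs.get i)) →
      CentroidDecomp (cs.get i) (node hs) →
      List.Forall₂ CentroidDecomp (cs.eraseIdx i) ds →
      (ds ++ hs).Perm es →
      CentroidDecomp (node cs) (node es)

lemma leaves_node_cons (c : RTree) (cs : List RTree) :
    leaves (node (c :: cs)) = ((c :: cs).map leaves).sum := by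
  rw [leaves]
  · simp [List.attach_map_val]
  · simp

lemma height_node (cs : List RTree) :
    height (node cs) = (cs.map (fun c => height c + 1)).foldr max 0 := by
  rw [height]; congr 1; simp [List.attach_map_val]

lemma one_le_leaves : ∀ t : RTree, 1 ≤ leaves t
  | node [] => by simp [leaves]
  | node (c :: cs) => by
    rw [leaves_node_cons]
    calc 1 ≤ leaves c := one_le_leaves c
    _ ≤ ((c :: cs).map leaves).sum :=
      List.single_le_sum (fun x _ => Nat.zero_le x) _ (by simp)

lemma sum_getElem_eraseIdx (l : List ℕ) (i : ℕ) (h : i < l.length) :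
    l[i] + (l.eraseIdx i).sum = l.sum := by
  rw [List.eraseIdx_eq_take_drop_succ, List.sum_append]
  conv_rhs => rw [← List.take_append_drop i l, List.drop_eq_getElem_cons h]
  simp only [List.sum_append, List.sum_cons]; omega

lemma map_eraseIdx (l : List RTree) (i : ℕ) (f : RTree → ℕ) :
    (l.eraseIdx i).map f = (l.map f).eraseIdx i := by
  simp [List.eraseIdx_eq_take_drop_succ, List.map_take, List.map_drop]

lemma leaves_get_add_le {cs : List RTree} (i : Fin cs.length) (c : RTree)
    (hc : c ∈ cs.eraseIdx i) : leaves c + leaves (cs.get i) ≤ leaves (node cs) := by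
  obtain ⟨d, ds, rfl⟩ : ∃ d ds, cs = d :: ds := by
    cases cs with
    | nil => exact absurd i.2 (by simp)
    | cons d ds => exact ⟨d, ds, rfl⟩
  rw [leaves_node_cons]
  have h1 : leaves ((d :: ds).get i) + ((((d :: ds).map leaves)).eraseIdx i).sum
      = ((d :: ds).map leaves).sum := by
    have h0 := sum_getElem_eraseIdx ((d :: ds).map leaves) i (by have := i.2; simp only [List.length_map, List.length_cons] at this ⊢; omega)
    rw [List.getElem_map] at h0
    simpa [List.get_eq_getElem] using h0
  have h2 : leaves c ≤ ((((d :: ds).map leaves)).eraseIdx i).sum := by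
    rw [← map_eraseIdx]
    exact List.single_le_sum (fun x _ => Nat.zero_le x) _ (List.mem_map_of_mem hc)
  omega

lemma leaves_le_of_mem {cs : List RTree} {c : RTree} (hc : c ∈ cs) :
    leaves c ≤ leaves (node cs) := by
  obtain ⟨d, ds, rfl⟩ : ∃ d ds, cs = d :: ds := by
    cases cs with
    | nil => simp at hc
    | cons d ds => exact ⟨d, ds, rfl⟩
  rw [leaves_node_cons]
  exact List.single_le_sum (fun x _ => Nat.zero_le x) _ (List.mem_map_of_mem hc)

lemma pow_foldr_le {n : ℕ} : ∀ l : List ℕ, 1 ≤ n → (∀ x ∈ l, 2 ^ x ≤ n) →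
    2 ^ (l.foldr max 0) ≤ n
  | [], h, _ => by simpa
  | a :: l, h, hx => by
    simp only [List.foldr_cons]
    rcases le_total a (l.foldr max 0) with hab | hab
    · rw [max_eq_right hab]
      exact pow_foldr_le l h fun x hx' => hx x (List.mem_cons_of_mem _ hx')
    · rw [max_eq_left hab]
      exact hx a List.mem_cons_self

/-- Key lemma: every child `e` of the root of a centroid decomposition of `t`
satisfies `2 ^ (height e + 1) ≤ leaves t`. -/
theorem key : ∀ (t : RTree) (es : List RTree), CentroidDecomp t (node es) →
    ∀ e ∈ es, 2 ^ (height e + 1) ≤ leaves t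
  | node cs, es, hd, e, he => by
    cases hd with
    | leaf => simp at he
    | @step _ i hs ds _ hmax hheavy hforall hperm =>
      have hgetmem : cs.get i ∈ cs := cs.get_mem i
      rcases (by simpa using hperm.symm.subset he : e ∈ ds ∨ e ∈ hs) with hds | hhs
      · -- e hangs off the root: paired with some c in eraseIdx
        obtain ⟨j, hj⟩ := List.get_of_mem hds
        have hlen := hforall.length_eq
        have hj' : (j : ℕ) < (cs.eraseIdx i).length := by
          have := j.2; omega
        have hc : CentroidDecomp ((cs.eraseIdx i).get ⟨j, hj'⟩) (ds.get j) :=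
          hforall.get _ _
        rw [hj] at hc
        set c := (cs.eraseIdx i).get ⟨j, hj'⟩ with hcdef
        have hcm : c ∈ cs.eraseIdx i := List.get_mem _ _
        have hcm' : c ∈ cs := List.eraseIdx_subset hcm
        obtain ⟨es'⟩ := e
        have hle : 2 ^ height (node es') ≤ leaves c := by
          rw [height_node]
          refine pow_foldr_le _ (one_le_leaves c) ?_
          intro x hx
          obtain ⟨f, hf, rfl⟩ := List.mem_map.mp hx
          exact key c es' hc f hf
        have hleaves : leaves c ≤ leaves (cs.get i) := by
          obtain ⟨k, hk⟩ := List.get_of_mem hcm'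
          rw [← hk]; exact hmax k
        calc 2 ^ (height (node es') + 1) = 2 ^ height (node es') * 2 := by ring
        _ ≤ leaves c * 2 := Nat.mul_le_mul_right 2 hle
        _ = leaves c + leaves c := by ring
        _ ≤ leaves c + leaves (cs.get i) := by omega
        _ ≤ leaves (node cs) := leaves_get_add_le i c hcm
      · -- e is inside the decomposition of the heavy child
        have h1 : 2 ^ (height e + 1) ≤ leaves (cs.get i) :=
          key (cs.get i) hs hheavy e hhs
        exact h1.trans (leaves_le_of_mem hgetmem)
termination_by t => sizeOf t
decreasing_by
  · have h := List.sizeOf_lt_of_mem hcm'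
    rw [hcdef] at h
    simp only [RTree.node.sizeOf_spec]; omega
  · have := List.sizeOf_lt_of_mem hgetmem
    simp only [RTree.node.sizeOf_spec]; omega

end RTree

/-- Observation 2: if `d` is a centroid path decomposition of `t`, then
`2 ^ height d ≤ leaves t`; in particular the height of the centroid path decomposition
is at most `log₂ (leaves t)`. -/
theorem centroid_decomposition_height (t d : RTree) (hd : RTree.CentroidDecomp t d) :
    2 ^ RTree.height d ≤ RTree.leaves t := by
  obtain ⟨es⟩ := d
  rw [RTree.height_node]
  refine RTree.pow_foldr_le _ (RTree.one_le_leaves t) ?_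
  intro x hx
  obtain ⟨f, hf, rfl⟩ := List.mem_map.mp hx
  exact RTree.key t es hd f hf
end

section
/- (Lemma: correctness of the Range Min tree forward search.) Let p be a balanced parentheses sequence of length 2n with excess function e, let i be a position holding an open parenthesis (so e(i+1) = e(i) + 1), and set the target x := e(i). Let the index range {i+1, …, 2n} be partitioned into consecutive nonempty blocks B₁, …, B_m, and for each block B_t let m_t := min over k ∈ B_t of e(k) and M_t := max over k ∈ B_t of e(k). Let j be the least t such that m_t ≤ x ≤ M_t (the block found by the Range Min-Max tree forward search, which contains the least k > i with e(k) = x), and let j' be the least t such that m_t ≤ x (the block found by the Range Min tree forward search). Then j' = j. -/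
/-- The excess function of a parentheses sequence `p` (encoded as a list of booleans,
`true` = '(' and `false` = ')'): `excess p k` is the number of open parentheses minus
the number of closed parentheses among the first `k` symbols. -/
def excess (p : List Bool) (k : ℕ) : ℤ :=
  ((p.take k).count true : ℤ) - ((p.take k).count false : ℤ)

lemma excess_succ_ge (p : List Bool) (k : ℕ) : excess p k - 1 ≤ excess p (k+1) := by
  unfold excess
  rw [List.take_succ]
  cases h : p[k]? with
  | none => simp [h]
  | some b => cases b <;> simp [h, List.count_append] <;> omega

lemma excess_open (p : List Bool) (i : ℕ) (hi : i < p.length)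
    (hopen : p.get ⟨i, hi⟩ = true) : excess p (i+1) = excess p i + 1 := by
  unfold excess
  have h : p[i]? = some true := by
    rw [List.getElem?_eq_getElem hi]; simpa using hopen
  rw [List.take_succ, h]
  simp [List.count_append]
  ring

lemma cover (bnd : ℕ → ℕ) (j' : ℕ) (hmono : ∀ t, t < j' → bnd t < bnd (t+1))
    (k : ℕ) (h1 : bnd 0 ≤ k) (h2 : k < bnd j') :
    ∃ t, t < j' ∧ bnd t ≤ k ∧ k < bnd (t+1) := by
  induction j' with
  | zero => omega
  | succ a ih =>
    by_cases h : bnd a ≤ k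
    · exact ⟨a, Nat.lt_succ_self a, h, h2⟩
    · obtain ⟨t, ht, h3, h4⟩ := ih (fun t ht => hmono t (Nat.lt_succ_of_lt ht)) (by omega)
      exact ⟨t, Nat.lt_succ_of_lt ht, h3, h4⟩


/-- correctness of the Range Min tree forward search.
Let `p` be a balanced parentheses sequence of length `2 * n`, `i` a position holding an
open parenthesis and `x := excess p i` the search target.  The index range
`{i+1, …, 2n}` is partitioned into `m` consecutive nonempty blocks, the `t`-th block
(for `t < m`) being `{bnd t, …, bnd (t+1) - 1}`, with `bnd 0 = i + 1` and
`bnd m = 2n + 1`; `mins t` and `maxs t` are the minimum and maximum of the excess on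
the `t`-th block.  If `j` is the least block index with `mins j ≤ x ≤ maxs j` (the
block found by the Range Min-Max tree forward search) and `j'` is the least block index
with `mins j' ≤ x` (the block found by the Range Min tree forward search), then
`j' = j`. -/
theorem range_min_tree_forward_search (n : ℕ) (p : List Bool) (hlen : p.length = 2 * n)
    (hnonneg : ∀ k, k ≤ p.length → 0 ≤ excess p k)
    (hbal : excess p p.length = 0)
    (i : ℕ) (hi : i < p.length) (hopen : p.get ⟨i, hi⟩ = true)
    -- the block boundaries: block `t` (for `t < m`) is `Set.Ico (bnd t) (bnd (t+1))`
    (m : ℕ) (bnd : ℕ → ℕ)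
    (hbnd0 : bnd 0 = i + 1) (hbndm : bnd m = 2 * n + 1)
    (hbndmono : ∀ t, t < m → bnd t < bnd (t + 1))
    -- the stored minima and maxima of the excess within each block
    (mins maxs : ℕ → ℤ)
    (hmins : ∀ t, t < m → IsLeast (excess p '' Set.Ico (bnd t) (bnd (t + 1))) (mins t))
    (hmaxs : ∀ t, t < m → IsGreatest (excess p '' Set.Ico (bnd t) (bnd (t + 1))) (maxs t))
    -- `j` : the least block index whose min and max enclose the target `excess p i`
    (j : ℕ) (hjm : j < m)
    (hj : mins j ≤ excess p i ∧ excess p i ≤ maxs j)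
    (hjleast : ∀ t, t < j → ¬(mins t ≤ excess p i ∧ excess p i ≤ maxs t))
    -- `j'` : the least block index whose min is at most the target `excess p i`
    (j' : ℕ) (hj'm : j' < m)
    (hj' : mins j' ≤ excess p i)
    (hj'least : ∀ t, t < j' → ¬(mins t ≤ excess p i)) :
    j' = j := by
  set x : ℤ := excess p i with hx
  have hmono' : ∀ a b, a < b → b ≤ m → bnd a < bnd b := by
    intro a b hab hbm
    induction b with
    | zero => omega
    | succ c ih =>
      rcases Nat.lt_or_ge a c with h | h
      · exact lt_trans (ih h (by omega)) (hbndmono c (by omega))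
      · have : a = c := by omega
        subst this; exact hbndmono a (by omega)
  -- x ≤ excess p (bnd j')
  have hstart : x ≤ excess p (bnd j') := by
    rcases Nat.eq_zero_or_pos j' with h0 | hpos
    · rw [h0, hbnd0, excess_open p i hi hopen]; omega
    · -- k := bnd j' - 1 lies in an earlier block
      have h0lt : bnd 0 < bnd j' := hmono' 0 j' hpos hj'm.le
      have hk2 : bnd j' - 1 < bnd j' := by omega
      have h01 : bnd 0 ≤ bnd j' - 1 := by omega
      obtain ⟨t, ht, h3, h4⟩ := cover bnd j'
        (fun t ht => hbndmono t (lt_trans ht hj'm)) (bnd j' - 1) h01 hk2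
      have hmem : excess p (bnd j' - 1) ∈ excess p '' Set.Ico (bnd t) (bnd (t+1)) :=
        ⟨bnd j' - 1, ⟨h3, h4⟩, rfl⟩
      have hlow := (hmins t (lt_trans ht hj'm)).2 hmem
      have hgt : ¬ mins t ≤ x := hj'least t ht
      have hstep := excess_succ_ge p (bnd j' - 1)
      have heq : bnd j' - 1 + 1 = bnd j' := by omega
      rw [heq] at hstep
      omega
  -- hence x ≤ maxs j'
  have hmax : x ≤ maxs j' := by
    have hmem : excess p (bnd j') ∈ excess p '' Set.Ico (bnd j') (bnd (j'+1)) :=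
      ⟨bnd j', ⟨le_refl _, hbndmono j' hj'm⟩, rfl⟩
    exact le_trans hstart ((hmaxs j' hj'm).2 hmem)
  -- conclude
  rcases lt_trichotomy j' j with h | h | h
  · exact absurd ⟨hj', hmax⟩ (hjleast j' h)
  · exact h
  · exact absurd hj.1 (hj'least j h)
end
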